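/- Let G be a discrete Borel groupoid and let A be a Borel subset of the isotropy subgroupoid Iso(G) = {g ∈ G : s(g) = t(g)}. Then the conjugacy class Ω_A = ⋃_{g ∈ G} g·A·g⁻¹ is a Borel subset of G. In fact, if B is any countable collection of Borel bisections covering G, then Ω_A = ⋃_{B ∈ B} B·A·B⁻¹. -/

import Mathlib

open MeasureTheory ENNReal

structure DiscreteBorelGroupoid (G : Type*) [MeasurableSpace G] where
  s : G → G
  t : G → G
  mul : G → G → G
  inv : G → G
  s_s : ∀ g, s (s g) = s g
  t_s : ∀ g, t (s g) = s g
  s_t : ∀ g, s (t g) = t g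
  t_t : ∀ g, t (t g) = t g
  mul_s_self : ∀ g, mul g (s g) = g
  t_mul_self : ∀ g, mul (t g) g = g
  s_mul : ∀ {g h}, s g = t h → s (mul g h) = s h
  t_mul : ∀ {g h}, s g = t h → t (mul g h) = t g
  mul_assoc : ∀ {g h k}, s g = t h → s h = t k → mul (mul g h) k = mul g (mul h k)
  s_inv : ∀ g, s (inv g) = t g
  t_inv : ∀ g, t (inv g) = s g
  mul_inv_self : ∀ g, mul g (inv g) = t g
  inv_mul_self : ∀ g, mul (inv g) g = s g
  measurable_s : Measurable s
  measurable_t : Measurable t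
  measurable_inv : Measurable inv
  measurable_mul : Measurable (Function.uncurry mul)
  countable_s_fibers : ∀ x, {g | s g = x}.Countable
  countable_t_fibers : ∀ x, {g | t g = x}.Countable

namespace DiscreteBorelGroupoid

variable {G : Type*} [MeasurableSpace G] (Γ : DiscreteBorelGroupoid G)

def units : Set G := Set.range Γ.s

def IsBisection (A : Set G) : Prop := Set.InjOn Γ.s A ∧ Set.InjOn Γ.t A

def smul (A B : Set G) : Set G :=
  {x | ∃ g ∈ A, ∃ h ∈ B, Γ.s g = Γ.t h ∧ x = Γ.mul g h}

def sinv (A : Set G) : Set G := Γ.inv '' A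

def iso : Set G := {g | Γ.s g = Γ.t g}

def conj (g h : G) : G := Γ.mul (Γ.mul g h) (Γ.inv g)

def conjClass (A : Set G) : Set G :=
  {x | ∃ g, ∃ a ∈ A, Γ.s g = Γ.t a ∧ x = Γ.conj g a}

noncomputable def muS (μ : Measure G) (E : Set G) : ℝ≥0∞ :=
  ∫⁻ x, ((E ∩ {g | Γ.s g = x}).encard : ℝ≥0∞) ∂μ

noncomputable def muT (μ : Measure G) (E : Set G) : ℝ≥0∞ :=
  ∫⁻ x, ((E ∩ {g | Γ.t g = x}).encard : ℝ≥0∞) ∂μ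

def IsMeasuredGroupoid (μ : Measure G) : Prop :=
  IsProbabilityMeasure μ ∧ μ Γ.unitsᶜ = 0 ∧
    ∀ E : Set G, MeasurableSet E → (Γ.muS μ E = 0 ↔ Γ.muT μ E = 0)

def IsErgodic (μ : Measure G) : Prop :=
  ∀ E : Set G, MeasurableSet E → E ⊆ Γ.units →
    (∀ g, Γ.s g ∈ E ↔ Γ.t g ∈ E) → μ E = 0 ∨ μ E = 1

def IsIcc (μ : Measure G) : Prop :=
  ∀ A : Set G, A ⊆ Γ.iso → MeasurableSet A → Γ.muS μ A ≠ 0 →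
    Γ.muS μ (Γ.conjClass A) < ⊤ → Γ.muS μ (A \ Γ.units) = 0

end DiscreteBorelGroupoid

namespace DiscreteBorelGroupoid

variable {G : Type*} [MeasurableSpace G] (Γ : DiscreteBorelGroupoid G)

lemma smul_cond {g a : G} (ha : a ∈ Γ.iso) (hsa : Γ.s g = Γ.t a) :
    Γ.s (Γ.mul g a) = Γ.t (Γ.inv g) := by
  rw [Γ.s_mul hsa, Γ.t_inv]
  have hsa' : Γ.s a = Γ.t a := ha
  rw [hsa']; exact hsa.symm

lemma t_conj {g a : G} (ha : a ∈ Γ.iso) (hsa : Γ.s g = Γ.t a) :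
    Γ.t (Γ.conj g a) = Γ.t g := by
  rw [conj, Γ.t_mul (Γ.smul_cond ha hsa), Γ.t_mul hsa]

lemma conj_recover {g a : G} (ha : a ∈ Γ.iso) (hsa : Γ.s g = Γ.t a) :
    Γ.mul (Γ.mul (Γ.inv g) (Γ.conj g a)) g = a := by
  have hsa' : Γ.s a = Γ.t a := ha
  have h1 : Γ.s (Γ.mul g a) = Γ.s g := by rw [Γ.s_mul hsa, hsa', ← hsa]
  have e1 : Γ.mul (Γ.inv g) (Γ.conj g a)
      = Γ.mul (Γ.mul (Γ.inv g) (Γ.mul g a)) (Γ.inv g) := by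
    rw [conj, ← Γ.mul_assoc (by rw [Γ.s_inv, Γ.t_mul hsa]) (by rw [h1, Γ.t_inv])]
  have e2 : Γ.mul (Γ.inv g) (Γ.mul g a) = a := by
    rw [← Γ.mul_assoc (Γ.s_inv g) hsa, Γ.inv_mul_self, hsa, Γ.t_mul_self]
  rw [e1, e2, Γ.mul_assoc (by rw [Γ.t_inv, hsa', ← hsa]) (by rw [Γ.s_inv]),
    Γ.inv_mul_self, hsa, ← hsa', Γ.mul_s_self]

/-- For a bisection B, the product B·A·B⁻¹ is exactly the set of conjugates by elements of B. -/
lemma smul_smul_sinv_eq {A B : Set G} (hA : A ⊆ Γ.iso) (hB : Γ.IsBisection B) :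
    Γ.smul (Γ.smul B A) (Γ.sinv B)
      = {x | ∃ g ∈ B, ∃ a ∈ A, Γ.s g = Γ.t a ∧ x = Γ.conj g a} := by
  ext x
  constructor
  · rintro ⟨y, ⟨g, hg, a, haA, hsa, rfl⟩, h, ⟨g', hg', rfl⟩, hcond, rfl⟩
    have hsa' : Γ.s a = Γ.t a := hA haA
    have : Γ.s g = Γ.s g' := by
      rw [Γ.s_mul hsa, Γ.t_inv] at hcond
      rw [hsa, ← hsa', hcond]
    have hgg : g = g' := hB.1 hg hg' this
    subst hgg
    exact ⟨g, hg, a, haA, hsa, rfl⟩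
  · rintro ⟨g, hg, a, haA, hsa, rfl⟩
    exact ⟨Γ.mul g a, ⟨g, hg, a, haA, hsa, rfl⟩, Γ.inv g, ⟨g, hg, rfl⟩,
      Γ.smul_cond (hA haA) hsa, rfl⟩

lemma conjSet_measurable {G : Type*} [MeasurableSpace G] [StandardBorelSpace G]
    (Γ : DiscreteBorelGroupoid G) {A B : Set G} (hA : A ⊆ Γ.iso) (hAm : MeasurableSet A)
    (hB : Γ.IsBisection B) (hBm : MeasurableSet B) :
    MeasurableSet {x | ∃ g ∈ B, ∃ a ∈ A, Γ.s g = Γ.t a ∧ x = Γ.conj g a} := by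
  set S : Set (G × G) := (B ×ˢ A) ∩ {p | Γ.s p.1 = Γ.t p.2} with hS
  have hSm : MeasurableSet S := by
    apply (hBm.prod hAm).inter
    letI := upgradeStandardBorel G
    exact MeasureTheory.StronglyMeasurable.measurableSet_eq_fun
      (Measurable.stronglyMeasurable (f := fun p : G × G => Γ.s p.1)
        (Γ.measurable_s.comp measurable_fst))
      (Measurable.stronglyMeasurable (f := fun p : G × G => Γ.t p.2)
        (Γ.measurable_t.comp measurable_snd))
  have hφ : Measurable fun p : G × G => Γ.conj p.1 p.2 := by
    have h1 : Measurable fun p : G × G => Γ.mul p.1 p.2 := Γ.measurable_mul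
    exact Γ.measurable_mul.comp ((h1.prodMk (Γ.measurable_inv.comp measurable_fst)))
  have hinj : Set.InjOn (fun p : G × G => Γ.conj p.1 p.2) S := by
    rintro ⟨g, a⟩ ⟨⟨hg, haA⟩, hsa⟩ ⟨g', a'⟩ ⟨⟨hg', haA'⟩, hsa'⟩ h
    simp only [Set.mem_setOf_eq] at h hsa hsa'
    simp only at hg haA hg' haA'
    have hsa : Γ.s g = Γ.t a := hsa
    have hsa' : Γ.s g' = Γ.t a' := hsa'
    have h : Γ.conj g a = Γ.conj g' a' := h
    have ht : Γ.t g = Γ.t g' := by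
      rw [← Γ.t_conj (hA haA) hsa, ← Γ.t_conj (hA haA') hsa', h]
    have hgg : g = g' := hB.2 hg hg' ht
    subst hgg
    have haa : a = a' := by
      rw [← Γ.conj_recover (hA haA) hsa, ← Γ.conj_recover (hA haA') hsa', h]
    rw [haa]
  have himg : {x | ∃ g ∈ B, ∃ a ∈ A, Γ.s g = Γ.t a ∧ x = Γ.conj g a}
      = (fun p : G × G => Γ.conj p.1 p.2) '' S := by
    ext x
    constructor
    · rintro ⟨g, hg, a, haA, hsa, rfl⟩
      exact ⟨(g, a), ⟨⟨hg, haA⟩, hsa⟩, rfl⟩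
    · rintro ⟨⟨g, a⟩, ⟨⟨hg, haA⟩, hsa⟩, rfl⟩
      exact ⟨g, hg, a, haA, hsa, rfl⟩
  rw [himg]
  exact hSm.image_of_measurable_injOn hφ hinj

end DiscreteBorelGroupoid

open DiscreteBorelGroupoid in
theorem stmt_1 {G : Type*} [MeasurableSpace G] [StandardBorelSpace G]
    (Γ : DiscreteBorelGroupoid G)
    (A : Set G) (hA : A ⊆ Γ.iso) (hAm : MeasurableSet A)
    (𝓑 : Set (Set G)) (h𝓑count : 𝓑.Countable)
    (h𝓑bis : ∀ B ∈ 𝓑, Γ.IsBisection B)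
    (h𝓑borel : ∀ B ∈ 𝓑, MeasurableSet B)
    (h𝓑cover : ⋃₀ 𝓑 = Set.univ) :
    MeasurableSet (Γ.conjClass A) ∧
      Γ.conjClass A = ⋃ B ∈ 𝓑, Γ.smul (Γ.smul B A) (Γ.sinv B) := by
  have hkey : ∀ B ∈ 𝓑, Γ.smul (Γ.smul B A) (Γ.sinv B)
      = {x | ∃ g ∈ B, ∃ a ∈ A, Γ.s g = Γ.t a ∧ x = Γ.conj g a} :=
    fun B hB => Γ.smul_smul_sinv_eq hA (h𝓑bis B hB)
  have heq : Γ.conjClass A = ⋃ B ∈ 𝓑, Γ.smul (Γ.smul B A) (Γ.sinv B) := by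
    ext x
    simp only [Set.mem_iUnion, conjClass, Set.mem_setOf_eq]
    constructor
    · rintro ⟨g, a, haA, hsa, rfl⟩
      obtain ⟨B, hB, hgB⟩ : ∃ B ∈ 𝓑, g ∈ B := by
        have : g ∈ ⋃₀ 𝓑 := h𝓑cover ▸ Set.mem_univ g
        simpa [Set.mem_sUnion] using this
      exact ⟨B, hB, (hkey B hB).symm ▸ ⟨g, hgB, a, haA, hsa, rfl⟩⟩
    · rintro ⟨B, hB, hx⟩
      rw [hkey B hB] at hx
      obtain ⟨g, _, a, haA, hsa, rfl⟩ := hx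
      exact ⟨g, a, haA, hsa, rfl⟩
  refine ⟨?_, heq⟩
  rw [heq]
  refine MeasurableSet.biUnion h𝓑count fun B hB => ?_
  rw [hkey B hB]
  exact Γ.conjSet_measurable hA hAm (h𝓑bis B hB) (h𝓑borel B hB)
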